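/- Let f : 2^N → ℝ be an arbitrary set function on a finite set N with extended multilinear extension F, and let y, z ∈ [0,1]^(2^N). Then F(y ⊕ z) = Σ_{J ⊆ 2^N} F(y ∨ Σ_{S ∈ J} χ_S) · ∏_{S ∈ J} z_S · ∏_{S ∈ 2^N ∖ J} (1 − z_S), where the sum ranges over all collections J of subsets of N. -/
import Mathlib


open scoped Classical

/-- A matroid on a finite ground set, given by its independent sets. -/
structure FinMatroid (α : Type*) [Fintype α] [DecidableEq α] where
  Indep : Finset α → Prop
  indep_empty : Indep ∅
  indep_subset : ∀ ⦃S T : Finset α⦄, Indep T → S ⊆ T → Indep S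
  indep_exchange : ∀ ⦃S T : Finset α⦄, Indep S → Indep T → S.card < T.card →
    ∃ u ∈ T \ S, Indep (insert u S)

variable {α : Type*} [Fintype α] [DecidableEq α]

/-- The rank of a set `A`: the maximum size of an independent subset of `A`. -/
noncomputable def FinMatroid.rank (M : FinMatroid α) (A : Finset α) : ℕ :=
  (A.powerset.filter fun S => M.Indep S).sup Finset.card

/-- A base of a matroid: an inclusion-wise maximal independent set. -/
def FinMatroid.IsBase (M : FinMatroid α) (B : Finset α) : Prop :=
  M.Indep B ∧ ∀ T : Finset α, M.Indep T → B ⊆ T → T = B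

/-- The extended multilinear extension of a set function `f`, evaluated at a
vector `y` with one coordinate for each subset of the ground set. -/
noncomputable def extMulti (f : Finset α → ℝ) (y : Finset α → ℝ) : ℝ :=
  ∑ J : Finset (Finset α), f (J.sup id) * ((∏ S ∈ J, y S) * ∏ S ∈ Jᶜ, (1 - y S))

/-- The standard multilinear extension of a set function `f`. -/
noncomputable def stdMulti (f : Finset α → ℝ) (x : α → ℝ) : ℝ :=
  ∑ S : Finset α, f S * ((∏ u ∈ S, x u) * ∏ u ∈ Sᶜ, (1 - x u))

/-- The marginal vector of `y`: `marg y u = 1 - ∏_{S ∋ u} (1 - y S)`. -/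
noncomputable def marg (y : Finset α → ℝ) (u : α) : ℝ :=
  1 - ∏ S ∈ Finset.univ.filter (fun S : Finset α => u ∈ S), (1 - y S)

/-- The characteristic vector of the coordinate indexed by the set `A`. -/
def chi (A : Finset α) : Finset α → ℝ := fun S => if S = A then 1 else 0

/-- The coordinate-wise probabilistic sum of two vectors. -/
def psum {ι : Type*} (a b : ι → ℝ) : ι → ℝ := fun i => 1 - (1 - a i) * (1 - b i)

/-- Membership of `x` in the matroid polytope `P(M)`. -/
def inMatroidPolytope (M : FinMatroid α) (x : α → ℝ) : Prop :=
  (∀ u, 0 ≤ x u) ∧ ∀ A : Finset α, ∑ u ∈ A, x u ≤ (M.rank A : ℝ)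


private lemma core_sum (y z : Finset α → ℝ) (K : Finset (Finset α)) :
    ∑ J : Finset (Finset α),
      ((∏ T ∈ K, (if T ∈ J then (1:ℝ) else y T)) *
        ∏ T ∈ Kᶜ, (1 - if T ∈ J then (1:ℝ) else y T)) *
        ((∏ S ∈ J, z S) * ∏ S ∈ Jᶜ, (1 - z S)) =
    (∏ T ∈ K, (1 - (1 - y T) * (1 - z T))) * ∏ T ∈ Kᶜ, ((1 - y T) * (1 - z T)) := by
  have hzero : ∀ J ∈ (Finset.univ : Finset (Finset (Finset α))), J ∉ K.powerset →
      ((∏ T ∈ K, (if T ∈ J then (1:ℝ) else y T)) *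
        ∏ T ∈ Kᶜ, (1 - if T ∈ J then (1:ℝ) else y T)) *
        ((∏ S ∈ J, z S) * ∏ S ∈ Jᶜ, (1 - z S)) = 0 := by
    intro J _ hJ
    rw [Finset.mem_powerset] at hJ
    obtain ⟨T, hTJ, hTK⟩ := Finset.not_subset.mp hJ
    have hTKc : T ∈ Kᶜ := Finset.mem_compl.mpr hTK
    have : (∏ T ∈ Kᶜ, (1 - if T ∈ J then (1:ℝ) else y T)) = 0 :=
      Finset.prod_eq_zero hTKc (by simp [hTJ])
    rw [this]; ring
  rw [← Finset.sum_subset (Finset.subset_univ K.powerset) hzero]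
  have hstep : ∀ J ∈ K.powerset,
      ((∏ T ∈ K, (if T ∈ J then (1:ℝ) else y T)) *
        ∏ T ∈ Kᶜ, (1 - if T ∈ J then (1:ℝ) else y T)) *
        ((∏ S ∈ J, z S) * ∏ S ∈ Jᶜ, (1 - z S)) =
      ((∏ S ∈ J, z S) * ∏ T ∈ K \ J, (y T * (1 - z T))) *
        ∏ T ∈ Kᶜ, ((1 - y T) * (1 - z T)) := by
    intro J hJ
    rw [Finset.mem_powerset] at hJ
    have h1 : (∏ T ∈ K, (if T ∈ J then (1:ℝ) else y T)) = ∏ T ∈ K \ J, y T := by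
      rw [← Finset.prod_sdiff hJ]
      rw [Finset.prod_congr rfl (fun T hT => if_neg (Finset.mem_sdiff.mp hT).2)]
      rw [Finset.prod_congr rfl (fun T hT => if_pos hT : ∀ T ∈ J, _ = (1:ℝ))]
      simp
    have h2 : (∏ T ∈ Kᶜ, (1 - if T ∈ J then (1:ℝ) else y T)) = ∏ T ∈ Kᶜ, (1 - y T) := by
      refine Finset.prod_congr rfl fun T hT => ?_
      have : T ∉ J := fun h => (Finset.mem_compl.mp hT) (hJ h)
      simp [this]
    have hsub : K \ J ⊆ Jᶜ := fun T hT =>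
      Finset.mem_compl.mpr (Finset.mem_sdiff.mp hT).2
    have h3 : (∏ S ∈ Jᶜ, (1 - z S)) =
        (∏ T ∈ Jᶜ \ (K \ J), (1 - z T)) * ∏ T ∈ K \ J, (1 - z T) :=
      (Finset.prod_sdiff hsub).symm
    have h4 : Jᶜ \ (K \ J) = Kᶜ := by
      ext T
      simp only [Finset.mem_sdiff, Finset.mem_compl]
      constructor
      · rintro ⟨hTJ, hT⟩ hTK
        exact hTJ (by_contra fun hTJ' => hT ⟨hTK, hTJ'⟩)
      · intro hTK
        exact ⟨fun h => hTK (hJ h), fun h => hTK h.1⟩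
    rw [h1, h2, h3, h4]
    rw [Finset.prod_mul_distrib, Finset.prod_mul_distrib]
    ring
  rw [Finset.sum_congr rfl hstep, ← Finset.sum_mul, ← Finset.prod_add]
  congr 1
  exact Finset.prod_congr rfl fun T _ => by ring

theorem extMulti_psum_expansion (f : Finset α → ℝ)
    (y z : Finset α → ℝ)
    (hy : ∀ S, 0 ≤ y S ∧ y S ≤ 1) (hz : ∀ S, 0 ≤ z S ∧ z S ≤ 1) :
    extMulti f (psum y z) =
      ∑ J : Finset (Finset α),
        extMulti f (fun T => max (y T) (∑ S ∈ J, chi S T)) *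
          ((∏ S ∈ J, z S) * ∏ S ∈ Jᶜ, (1 - z S)) := by
  have hv : ∀ (J : Finset (Finset α)),
      (fun T => max (y T) (∑ S ∈ J, chi S T)) =
      (fun T => if T ∈ J then (1:ℝ) else y T) := by
    intro J
    funext T
    have hsum : (∑ S ∈ J, chi S T) = if T ∈ J then (1:ℝ) else 0 := by
      simp [chi, Finset.sum_ite_eq]
    rw [hsum]
    split
    · exact max_eq_right (hy T).2
    · exact max_eq_left (hy T).1
  simp only [hv]
  unfold extMulti psum
  simp only [Finset.sum_mul]
  rw [Finset.sum_comm]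
  refine Finset.sum_congr rfl fun K _ => ?_
  have := core_sum y z K
  calc f (K.sup id) * ((∏ S ∈ K, (1 - (1 - y S) * (1 - z S))) *
          ∏ S ∈ Kᶜ, (1 - (1 - (1 - y S) * (1 - z S))))
      = f (K.sup id) * ((∏ S ∈ K, (1 - (1 - y S) * (1 - z S))) *
          ∏ S ∈ Kᶜ, ((1 - y S) * (1 - z S))) := by
        congr 2
        exact Finset.prod_congr rfl fun S _ => by ring
    _ = f (K.sup id) * ∑ J : Finset (Finset α),
          ((∏ T ∈ K, (if T ∈ J then (1:ℝ) else y T)) *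
            ∏ T ∈ Kᶜ, (1 - if T ∈ J then (1:ℝ) else y T)) *
            ((∏ S ∈ J, z S) * ∏ S ∈ Jᶜ, (1 - z S)) := by rw [this]
    _ = _ := by
        rw [Finset.mul_sum]
        exact Finset.sum_congr rfl fun J _ => by ring
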